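/- Let m ≥ 1 and n be positive integers, let L be a layer-rainbow latin cube of order m, and let L' be a layer-rainbow latin cube of order n extending L via the injection φ : Fin (m^2) → Fin (n^2). Then for every symbol s ∈ Fin (m^2), the number of cells (x, y, z) ∈ (Fin n)^3 with all three coordinates at least m and L'(x, y, z) = φ(s) is exactly n − m. Consequently, counting over all m^2 symbols in the image of φ, one obtains m^2 · (n − m) ≤ (n − m)^3. -/

import Mathlib

/-- A layer-rainbow latin cube of order `n`: an `n × n × n` array filled with
`n^2` symbols such that each layer parallel to each face (obtained by fixing
one coordinate) contains every symbol exactly once. -/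
def IsLayerRainbowLatinCube {n : ℕ} (L : Fin n × Fin n × Fin n → Fin (n ^ 2)) : Prop :=
  (∀ i : Fin n, Function.Injective fun p : Fin n × Fin n => L (i, p.1, p.2)) ∧
  (∀ j : Fin n, Function.Injective fun p : Fin n × Fin n => L (p.1, j, p.2)) ∧
  (∀ k : Fin n, Function.Injective fun p : Fin n × Fin n => L (p.1, p.2, k))

/-- `L'` of order `n` extends `L` of order `m ≤ n` via the injection `φ`. -/
def ExtendsVia {m n : ℕ} (h : m ≤ n) (L : Fin m × Fin m × Fin m → Fin (m ^ 2))
    (L' : Fin n × Fin n × Fin n → Fin (n ^ 2)) (φ : Fin (m ^ 2) → Fin (n ^ 2)) : Prop :=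
  Function.Injective φ ∧
  ∀ i j k : Fin m, L' (Fin.castLE h i, Fin.castLE h j, Fin.castLE h k) = φ (L (i, j, k))

/-- If `L'` of order `n` extends `L` of order `m` via `φ`, then each symbol
`φ s` occupies exactly `n - m` cells all of whose coordinates are at least
`m`; consequently `m^2 * (n - m) ≤ (n - m)^3`. -/
theorem layerRainbow_extension_count (m n : ℕ) (hm : 1 ≤ m) (hn : 1 ≤ n)
    (h : m ≤ n) (L : Fin m × Fin m × Fin m → Fin (m ^ 2))
    (hL : IsLayerRainbowLatinCube L)
    (L' : Fin n × Fin n × Fin n → Fin (n ^ 2)) (hL' : IsLayerRainbowLatinCube L')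
    (φ : Fin (m ^ 2) → Fin (n ^ 2)) (hext : ExtendsVia h L L' φ) :
    (∀ s : Fin (m ^ 2),
      (Finset.univ.filter fun p : Fin n × Fin n × Fin n =>
        m ≤ (p.1 : ℕ) ∧ m ≤ (p.2.1 : ℕ) ∧ m ≤ (p.2.2 : ℕ) ∧ L' p = φ s).card
        = n - m) ∧
    m ^ 2 * (n - m) ≤ (n - m) ^ 3 := by
  obtain ⟨h1, h2, h3⟩ := hL'
  obtain ⟨g1, g2, g3⟩ := hL
  obtain ⟨hφ, hcomp⟩ := hext
  have cardm : Fintype.card (Fin m × Fin m) = Fintype.card (Fin (m ^ 2)) := by simp [sq]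
  have cardn : Fintype.card (Fin n × Fin n) = Fintype.card (Fin (n ^ 2)) := by simp [sq]
  have s1 : ∀ i : Fin n, Function.Surjective fun p : Fin n × Fin n => L' (i, p.1, p.2) :=
    fun i => ((Fintype.bijective_iff_injective_and_card _).mpr ⟨h1 i, cardn⟩).surjective
  have s2' : ∀ j : Fin m, Function.Surjective fun p : Fin m × Fin m => L (p.1, j, p.2) :=
    fun j => ((Fintype.bijective_iff_injective_and_card _).mpr ⟨g2 j, cardm⟩).surjective
  have s3' : ∀ k : Fin m, Function.Surjective fun p : Fin m × Fin m => L (p.1, p.2, k) :=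
    fun k => ((Fintype.bijective_iff_injective_and_card _).mpr ⟨g3 k, cardm⟩).surjective
  -- every occurrence of φ s with first coordinate ≥ m has all coordinates ≥ m
  have keyY : ∀ (s : Fin (m ^ 2)) (x y z : Fin n), L' (x, y, z) = φ s → m ≤ (x : ℕ) →
      m ≤ (y : ℕ) := by
    intro s x y z hxyz hx
    by_contra hy
    push_neg at hy
    obtain ⟨⟨a, c⟩, hac⟩ := s2' ⟨y, hy⟩ s
    have heq : L' (Fin.castLE h a, y, Fin.castLE h c) = φ s := by
      have := hcomp a ⟨y, hy⟩ c
      simp only at hac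
      rw [hac] at this
      convert this using 3
      rfl
    have := h2 y (a₁ := (Fin.castLE h a, Fin.castLE h c)) (a₂ := (x, z))
      (by simp only; rw [heq, hxyz])
    have hx' : (Fin.castLE h a : Fin n) = x := congrArg Prod.fst this
    have : (a : ℕ) = (x : ℕ) := by rw [← hx']; simp
    omega
  have keyZ : ∀ (s : Fin (m ^ 2)) (x y z : Fin n), L' (x, y, z) = φ s → m ≤ (x : ℕ) →
      m ≤ (z : ℕ) := by
    intro s x y z hxyz hx
    by_contra hz
    push_neg at hz
    obtain ⟨⟨a, c⟩, hac⟩ := s3' ⟨z, hz⟩ s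
    have heq : L' (Fin.castLE h a, Fin.castLE h c, z) = φ s := by
      have := hcomp a c ⟨z, hz⟩
      simp only at hac
      rw [hac] at this
      convert this using 3
      rfl
    have := h3 z (a₁ := (Fin.castLE h a, Fin.castLE h c)) (a₂ := (x, y))
      (by simp only; rw [heq, hxyz])
    have hx' : (Fin.castLE h a : Fin n) = x := congrArg Prod.fst this
    have : (a : ℕ) = (x : ℕ) := by rw [← hx']; simp
    omega
  have hT : (Finset.univ.filter fun i : Fin n => m ≤ (i : ℕ)).card = n - m := by
    rw [← Nat.card_Ico m n]
    refine Finset.card_nbij (fun i => (i : ℕ)) ?_ ?_ ?_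
    · intro i hi; simp at hi ⊢; exact hi
    · intro a _ b _ hab; exact Fin.ext hab
    · intro x hx; simp [Finset.mem_Ico] at hx ⊢; exact ⟨⟨x, hx.2⟩, hx.1, rfl⟩
  have main : ∀ s : Fin (m ^ 2),
      (Finset.univ.filter fun p : Fin n × Fin n × Fin n =>
        m ≤ (p.1 : ℕ) ∧ m ≤ (p.2.1 : ℕ) ∧ m ≤ (p.2.2 : ℕ) ∧ L' p = φ s).card = n - m := by
    intro s
    rw [← hT]
    refine Finset.card_nbij (fun p => p.1) ?_ ?_ ?_
    · intro p hp; simp only [Finset.coe_filter, Set.mem_setOf_eq] at hp ⊢; exact ⟨Finset.mem_univ _, hp.2.1⟩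
    · intro p hp q hq hpq
      simp only [Finset.coe_filter, Set.mem_setOf_eq] at hp hq
      have hv : L' (p.1, p.2.1, p.2.2) = L' (q.1, q.2.1, q.2.2) := by
        rw [show (p.1, p.2.1, p.2.2) = p from rfl, show (q.1, q.2.1, q.2.2) = q from rfl,
          hp.2.2.2.2, hq.2.2.2.2]
      rw [show p.1 = q.1 from hpq] at hv
      have := h1 q.1 (a₁ := (p.2.1, p.2.2)) (a₂ := (q.2.1, q.2.2)) hv
      have h2' : p.2 = q.2 :=
        Prod.ext (congrArg Prod.fst this) (congrArg Prod.snd this)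
      exact Prod.ext (show p.1 = q.1 from hpq) h2'
    · intro i hi
      simp only [Finset.coe_filter, Set.mem_setOf_eq] at hi
      obtain ⟨⟨j, k⟩, hjk⟩ := s1 i (φ s)
      refine ⟨(i, j, k), ?_, rfl⟩
      simp only [Finset.coe_filter, Set.mem_setOf_eq]
      exact ⟨Finset.mem_univ _, hi.2, keyY s i j k hjk hi.2, keyZ s i j k hjk hi.2, hjk⟩
  refine ⟨main, ?_⟩
  -- second part
  set T := Finset.univ.filter fun i : Fin n => m ≤ (i : ℕ) with hTdef
  set U := Finset.univ.filter fun p : Fin n × Fin n × Fin n =>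
      m ≤ (p.1 : ℕ) ∧ m ≤ (p.2.1 : ℕ) ∧ m ≤ (p.2.2 : ℕ) with hUdef
  have hU : U.card = (n - m) ^ 3 := by
    have : U = T ×ˢ (T ×ˢ T) := by
      ext p; simp [hUdef, hTdef, and_assoc]
    rw [this, Finset.card_product, Finset.card_product, hT]
    ring
  have hdisj : ((Finset.univ : Finset (Fin (m ^ 2))) : Set (Fin (m ^ 2))).PairwiseDisjoint
      (fun s : Fin (m ^ 2) => Finset.univ.filter fun p : Fin n × Fin n × Fin n =>
        m ≤ (p.1 : ℕ) ∧ m ≤ (p.2.1 : ℕ) ∧ m ≤ (p.2.2 : ℕ) ∧ L' p = φ s) := by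
    intro s _ t _ hst
    refine Finset.disjoint_left.mpr ?_
    intro p hp hp'
    simp only [Finset.mem_filter] at hp hp'
    exact hst (hφ (hp.2.2.2.2.symm.trans hp'.2.2.2.2))
  have hsub : (Finset.univ.biUnion fun s : Fin (m ^ 2) =>
      Finset.univ.filter fun p : Fin n × Fin n × Fin n =>
        m ≤ (p.1 : ℕ) ∧ m ≤ (p.2.1 : ℕ) ∧ m ≤ (p.2.2 : ℕ) ∧ L' p = φ s) ⊆ U := by
    intro p hp
    simp only [Finset.mem_biUnion, Finset.mem_filter] at hp
    obtain ⟨s, _, _, h1', h2', h3', _⟩ := hp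
    simp [hUdef, h1', h2', h3']
  calc m ^ 2 * (n - m) = ∑ s : Fin (m ^ 2),
        (Finset.univ.filter fun p : Fin n × Fin n × Fin n =>
          m ≤ (p.1 : ℕ) ∧ m ≤ (p.2.1 : ℕ) ∧ m ≤ (p.2.2 : ℕ) ∧ L' p = φ s).card := by
        simp [main, mul_comm]
    _ = (Finset.univ.biUnion fun s : Fin (m ^ 2) =>
        Finset.univ.filter fun p : Fin n × Fin n × Fin n =>
          m ≤ (p.1 : ℕ) ∧ m ≤ (p.2.1 : ℕ) ∧ m ≤ (p.2.2 : ℕ) ∧ L' p = φ s).card :=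
        (Finset.card_biUnion hdisj).symm
    _ ≤ U.card := Finset.card_le_card hsub
    _ = (n - m) ^ 3 := hU
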